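/- Let T ≥ 1, let (a_t)_{0≤t≤T+1}, (b_t)_{0≤t≤T}, (c_t)_{0≤t≤T} be nonnegative reals with a_0 = b_0 = c_0 = 0, let d ≥ 0, let (m_t)_{0≤t≤T} and (β_t)_{0≤t≤T} be nonnegative reals, and let (μ_t) be real scalars. Assume that for every t ≤ T: a_{t+1} ≤ m_t·(b_t + c_t) + β_t·d, b_{t+1} ≤ a_{t+1} + c_t (for t+1 ≤ T), and c_{t+1} ≤ |μ_t|·(2·a_{t+1} + c_t) (for t+1 ≤ T). Define w_i^t = 2·m_t·(|μ_{t−1}| + 1)·Π_{j=i−1}^{t−2} |μ_j| for 1 ≤ i ≤ t ≤ T (products over empty index sets equal 1), and assume the monotonicity condition w_i^t ≤ w_i^T for all 1 ≤ i ≤ t ≤ T. Then a_{T+1} ≤ (max_{0≤t≤T} β_t) · Π_{i=1}^{T} (1 + w_i^T) · d. -/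

import Mathlib

lemma prod_one_add_eq (f : ℕ → ℝ) (t : ℕ) :
    ∏ i ∈ Finset.Icc 1 t, (1 + f i) =
      1 + ∑ i ∈ Finset.Icc 1 t, f i * ∏ j ∈ Finset.Icc 1 (i - 1), (1 + f j) := by
  induction t with
  | zero => simp
  | succ n ih =>
    rw [Finset.prod_Icc_succ_top (by omega : 1 ≤ n + 1),
      Finset.sum_Icc_succ_top (by omega : 1 ≤ n + 1), Nat.add_sub_cancel, ih]
    ring

/-- Proposition 3 of the paper, in the conditional form established by its proof:
with `a_t = ‖δˢ_t‖₂`, `b_t = ‖δᵛ_t‖₂`, `c_t = ‖δʸ_t‖₂`, `d = ‖δˣ‖₂`, `m_t = ‖M_t‖₂`,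
`β_t = ‖B_t‖₂` satisfying the per-step ADMM perturbation recursions, and assuming the
weights `w_i^t = 2 m_t (|μ_{t−1}| + 1) Π_{j=i−1}^{t−2} |μ_j|` are dominated by `w_i^T`
(as required by the discrete Gronwall inequality), ADMM with `T+1` iterations satisfies
`a_{T+1} ≤ (max_{0≤t≤T} β_t) Π_{i=1}^{T} (1 + w_i^T) · d`. -/
theorem stmt11 (T : ℕ) (hT : 1 ≤ T)
    (a b c : ℕ → ℝ) (m β μ : ℕ → ℝ) (d : ℝ)
    (ha : ∀ t ≤ T + 1, 0 ≤ a t) (hb : ∀ t ≤ T, 0 ≤ b t) (hc : ∀ t ≤ T, 0 ≤ c t)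
    (ha0 : a 0 = 0) (hb0 : b 0 = 0) (hc0 : c 0 = 0) (hd : 0 ≤ d)
    (hm : ∀ t ≤ T, 0 ≤ m t) (hβ : ∀ t ≤ T, 0 ≤ β t)
    (hra : ∀ t ≤ T, a (t + 1) ≤ m t * (b t + c t) + β t * d)
    (hrb : ∀ t, t + 1 ≤ T → b (t + 1) ≤ a (t + 1) + c t)
    (hrc : ∀ t, t + 1 ≤ T → c (t + 1) ≤ |μ t| * (2 * a (t + 1) + c t))
    (w : ℕ → ℕ → ℝ)
    (hw : ∀ i t, 1 ≤ i → i ≤ t → t ≤ T →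
      w i t = 2 * m t * (|μ (t - 1)| + 1) * ∏ j ∈ Finset.Ico (i - 1) (t - 1), |μ j|)
    (hmono : ∀ i t, 1 ≤ i → i ≤ t → t ≤ T → w i t ≤ w i T) :
    a (T + 1) ≤
      ((Finset.range (T + 1)).sup' (Finset.nonempty_range_iff.mpr T.succ_ne_zero) β)
        * (∏ i ∈ Finset.Icc 1 T, (1 + w i T)) * d := by
  set B := ((Finset.range (T + 1)).sup' (Finset.nonempty_range_iff.mpr T.succ_ne_zero) β)
    with hBdef
  have hB : ∀ t ≤ T, β t ≤ B := fun t ht =>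
    Finset.le_sup' β (Finset.mem_range.mpr (by omega))
  have hB0 : 0 ≤ B := le_trans (hβ 0 (by omega)) (hB 0 (by omega))
  -- nonnegativity of the weights
  have hwnn : ∀ i, 1 ≤ i → i ≤ T → 0 ≤ w i T := by
    intro i hi1 hi2
    rw [hw i T hi1 hi2 le_rfl]
    have h1 : 0 ≤ 2 * m T * (|μ (T - 1)| + 1) := by
      have := hm T le_rfl
      positivity
    exact mul_nonneg h1 (Finset.prod_nonneg fun j _ => abs_nonneg _)
  -- bound on c by unrolling its recursion
  have hC : ∀ t, t ≤ T →
      c t ≤ 2 * ∑ i ∈ Finset.Icc 1 t, a i * ∏ j ∈ Finset.Ico (i - 1) t, |μ j| := by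
    intro t
    induction t with
    | zero => intro _; simp [hc0]
    | succ n ih =>
      intro hn
      have h1 := hrc n hn
      have h2 := ih (by omega)
      have han := ha (n + 1) (by omega)
      have hμn := abs_nonneg (μ n)
      calc c (n + 1) ≤ |μ n| * (2 * a (n + 1) + c n) := h1
        _ ≤ |μ n| * (2 * a (n + 1)
              + 2 * ∑ i ∈ Finset.Icc 1 n, a i * ∏ j ∈ Finset.Ico (i - 1) n, |μ j|) := by
            exact mul_le_mul_of_nonneg_left (by linarith) hμn
        _ = 2 * ∑ i ∈ Finset.Icc 1 (n + 1), a i * ∏ j ∈ Finset.Ico (i - 1) (n + 1), |μ j| := by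
            rw [Finset.sum_Icc_succ_top (by omega : 1 ≤ n + 1)]
            have e1 : ∑ i ∈ Finset.Icc 1 n, a i * ∏ j ∈ Finset.Ico (i - 1) (n + 1), |μ j|
                = ∑ i ∈ Finset.Icc 1 n,
                    (a i * ∏ j ∈ Finset.Ico (i - 1) n, |μ j|) * |μ n| := by
              refine Finset.sum_congr rfl fun i hi => ?_
              obtain ⟨hi1, hi2⟩ := Finset.mem_Icc.mp hi
              rw [Finset.prod_Ico_succ_top (by omega : i - 1 ≤ n), mul_assoc]
            have e2 : ∏ j ∈ Finset.Ico (n + 1 - 1) (n + 1), |μ j| = |μ n| := by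
              rw [Nat.add_sub_cancel, Finset.prod_Ico_succ_top le_rfl]
              simp
            rw [e1, e2, ← Finset.sum_mul]
            ring
  -- the Gronwall-ready recursion (equation (A.9))
  have key : ∀ t, t ≤ T → a (t + 1) ≤ B * d + ∑ i ∈ Finset.Icc 1 t, w i T * a i := by
    intro t ht
    rcases Nat.eq_zero_or_pos t with rfl | htpos
    · have h1 := hra 0 (by omega)
      rw [hb0, hc0] at h1
      have hb0d : β 0 * d ≤ B * d := mul_le_mul_of_nonneg_right (hB 0 (by omega)) hd
      simp only [show Finset.Icc 1 0 = (∅ : Finset ℕ) from by simp, Finset.sum_empty, add_zero]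
      nlinarith
    · obtain ⟨n, rfl⟩ : ∃ n, t = n + 1 := ⟨t - 1, by omega⟩
      have h1 := hra (n + 1) ht
      have h2 := hrb n ht
      have h3 := hrc n ht
      have h4 := hC n (by omega)
      have hmn := hm (n + 1) ht
      have han := ha (n + 1) (by omega)
      have hcn := hc n (by omega)
      have hμn := abs_nonneg (μ n)
      set S := ∑ i ∈ Finset.Icc 1 n, a i * ∏ j ∈ Finset.Ico (i - 1) n, |μ j| with hSdef
      set K := 2 * m (n + 1) * (|μ n| + 1) with hKdef
      have hwval : ∀ i, 1 ≤ i → i ≤ n + 1 →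
          w i (n + 1) = K * ∏ j ∈ Finset.Ico (i - 1) n, |μ j| := by
        intro i hi1 hi2
        rw [hw i (n + 1) hi1 hi2 ht, Nat.add_sub_cancel]
      -- step: b + c bound
      have e1 : b (n + 1) + c (n + 1) ≤ 2 * (1 + |μ n|) * (a (n + 1) + S) := by
        have h5 : |μ n| * c n ≤ |μ n| * (2 * S) := mul_le_mul_of_nonneg_left h4 hμn
        have hSnn : 0 ≤ S := by nlinarith
        nlinarith
      have e2 : m (n + 1) * (b (n + 1) + c (n + 1)) ≤ K * (a (n + 1) + S) := by
        calc m (n + 1) * (b (n + 1) + c (n + 1))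
            ≤ m (n + 1) * (2 * (1 + |μ n|) * (a (n + 1) + S)) :=
              mul_le_mul_of_nonneg_left e1 hmn
          _ = K * (a (n + 1) + S) := by rw [hKdef]; ring
      have e3 : K * (a (n + 1) + S) = ∑ i ∈ Finset.Icc 1 (n + 1), w i (n + 1) * a i := by
        rw [Finset.sum_Icc_succ_top (by omega : 1 ≤ n + 1),
          hwval (n + 1) (by omega) le_rfl, Nat.add_sub_cancel, Finset.Ico_self,
          Finset.prod_empty, mul_one]
        have : ∑ i ∈ Finset.Icc 1 n, w i (n + 1) * a i
            = ∑ i ∈ Finset.Icc 1 n, K * (a i * ∏ j ∈ Finset.Ico (i - 1) n, |μ j|) := by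
          refine Finset.sum_congr rfl fun i hi => ?_
          obtain ⟨hi1, hi2⟩ := Finset.mem_Icc.mp hi
          rw [hwval i hi1 (by omega)]
          ring
        rw [this, ← Finset.mul_sum, ← hSdef]
        ring
      have e4 : ∑ i ∈ Finset.Icc 1 (n + 1), w i (n + 1) * a i
          ≤ ∑ i ∈ Finset.Icc 1 (n + 1), w i T * a i := by
        refine Finset.sum_le_sum fun i hi => ?_
        obtain ⟨hi1, hi2⟩ := Finset.mem_Icc.mp hi
        exact mul_le_mul_of_nonneg_right (hmono i (n + 1) hi1 hi2 ht) (ha i (by omega))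
      have e5 : β (n + 1) * d ≤ B * d := mul_le_mul_of_nonneg_right (hB (n + 1) ht) hd
      calc a (n + 1 + 1) ≤ m (n + 1) * (b (n + 1) + c (n + 1)) + β (n + 1) * d := h1
        _ ≤ K * (a (n + 1) + S) + B * d := by linarith
        _ = ∑ i ∈ Finset.Icc 1 (n + 1), w i (n + 1) * a i + B * d := by rw [e3]
        _ ≤ B * d + ∑ i ∈ Finset.Icc 1 (n + 1), w i T * a i := by linarith
  -- discrete Gronwall
  have claim : ∀ t, t ≤ T → a (t + 1) ≤ B * d * ∏ i ∈ Finset.Icc 1 t, (1 + w i T) := by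
    intro t
    induction t using Nat.strong_induction_on with
    | _ t ih =>
      intro ht
      have hk := key t ht
      have hsb : ∑ i ∈ Finset.Icc 1 t, w i T * a i
          ≤ ∑ i ∈ Finset.Icc 1 t,
              w i T * (B * d * ∏ j ∈ Finset.Icc 1 (i - 1), (1 + w j T)) := by
        refine Finset.sum_le_sum fun i hi => ?_
        obtain ⟨hi1, hi2⟩ := Finset.mem_Icc.mp hi
        have hwi := hwnn i hi1 (le_trans hi2 ht)
        have hai : a i ≤ B * d * ∏ j ∈ Finset.Icc 1 (i - 1), (1 + w j T) := by
          have := ih (i - 1) (by omega) (by omega)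
          rwa [Nat.sub_add_cancel hi1] at this
        exact mul_le_mul_of_nonneg_left hai hwi
      have e6 : ∑ i ∈ Finset.Icc 1 t,
            w i T * (B * d * ∏ j ∈ Finset.Icc 1 (i - 1), (1 + w j T))
          = B * d * ∑ i ∈ Finset.Icc 1 t,
              w i T * ∏ j ∈ Finset.Icc 1 (i - 1), (1 + w j T) := by
        rw [Finset.mul_sum]
        exact Finset.sum_congr rfl fun i _ => by ring
      calc a (t + 1) ≤ B * d + ∑ i ∈ Finset.Icc 1 t, w i T * a i := hk
        _ ≤ B * d + ∑ i ∈ Finset.Icc 1 t,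
              w i T * (B * d * ∏ j ∈ Finset.Icc 1 (i - 1), (1 + w j T)) :=
            add_le_add_right hsb _
        _ = B * d * (1 + ∑ i ∈ Finset.Icc 1 t,
              w i T * ∏ j ∈ Finset.Icc 1 (i - 1), (1 + w j T)) := by rw [e6]; ring
        _ = B * d * ∏ i ∈ Finset.Icc 1 t, (1 + w i T) := by
            rw [prod_one_add_eq (fun i => w i T) t]
  have := claim T le_rfl
  calc a (T + 1) ≤ B * d * ∏ i ∈ Finset.Icc 1 T, (1 + w i T) := this
    _ = B * (∏ i ∈ Finset.Icc 1 T, (1 + w i T)) * d := by ring
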